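/- A quadratic polynomial f ∈ ℤ[x] is intersective (i.e., has a root modulo q for every positive integer q) if and only if f can be written as f(x) = a(αx + β)(γx + λ) with integers a, α, β, γ, λ satisfying gcd(α,β) = gcd(γ,λ) = gcd(α,γ) = 1. -/

import Mathlib

def copart (N k : ℕ) : ℕ := N / N.gcd (k ^ N)

lemma copart_dvd (N k : ℕ) : copart N k ∣ N := Nat.div_dvd_of_dvd (Nat.gcd_dvd_left _ _)

lemma copart_gcd_mul (N k : ℕ) : N.gcd (k ^ N) * copart N k = N :=
  Nat.mul_div_cancel' (Nat.gcd_dvd_left _ _)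

lemma copart_ne_zero {N : ℕ} (hN : N ≠ 0) (k : ℕ) : copart N k ≠ 0 := by
  have h := Nat.gcd_dvd_left N (k ^ N)
  have hg : N.gcd (k ^ N) ≠ 0 := fun h0 => hN ((Nat.gcd_eq_zero_iff.mp h0).1)
  exact Nat.ne_of_gt (Nat.div_pos (Nat.le_of_dvd (Nat.pos_of_ne_zero hN) h) (Nat.pos_of_ne_zero hg))

lemma copart_factorization {N : ℕ} (hN : N ≠ 0) {k : ℕ} (hk : k ≠ 0) (r : ℕ) (hr : r.Prime) :
    (copart N k).factorization r = if r ∣ k then 0 else N.factorization r := by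
  have hkN : k ^ N ≠ 0 := pow_ne_zero _ hk
  have hg : N.gcd (k ^ N) ∣ N := Nat.gcd_dvd_left _ _
  rw [copart, Nat.factorization_div hg, Nat.factorization_gcd hN hkN,
    Nat.factorization_pow]
  simp only [Finsupp.coe_tsub, Pi.sub_apply, Finsupp.inf_apply, Finsupp.smul_apply, smul_eq_mul]
  by_cases h : r ∣ k
  · have h1 : 1 ≤ k.factorization r := (Nat.Prime.factorization_pos_of_dvd hr hk h)
    have : N.factorization r ≤ N * k.factorization r :=
      le_trans (le_of_lt (Nat.factorization_lt r hN)) (by nlinarith)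
    simp [h, min_eq_left this]
  · have : k.factorization r = 0 := Nat.factorization_eq_zero_of_not_dvd h
    simp [h, this]

lemma copart_coprime {N : ℕ} (hN : N ≠ 0) {k : ℕ} (hk : k ≠ 0) : Nat.Coprime (copart N k) k := by
  by_contra h
  obtain ⟨r, hr, hrd⟩ := Nat.exists_prime_and_dvd h
  have h1 : r ∣ copart N k := hrd.trans (Nat.gcd_dvd_left _ _)
  have h2 : r ∣ k := hrd.trans (Nat.gcd_dvd_right _ _)
  have h3 := copart_factorization hN hk r hr
  rw [if_pos h2] at h3
  have := Nat.Prime.factorization_pos_of_dvd hr (copart_ne_zero hN k) h1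
  omega

lemma dvd_copart {N : ℕ} (hN : N ≠ 0) {k d : ℕ} (hk : k ≠ 0) (hd : d ∣ N)
    (hdk : Nat.Coprime d k) : d ∣ copart N k := by
  have hd0 : d ≠ 0 := fun h => hN (by simpa [h] using hd)
  rw [← Nat.factorization_le_iff_dvd hd0 (copart_ne_zero hN k)]
  intro r
  rcases Nat.eq_zero_or_pos (d.factorization r) with h0 | hpos
  · simp [h0]
  · have hne : d.factorization r ≠ 0 := hpos.ne'
    have hrd : r ∣ d := Nat.dvd_of_factorization_pos hne
    have hr : r.Prime := Nat.prime_of_mem_primeFactors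
      ((Nat.support_factorization d) ▸ Finsupp.mem_support_iff.mpr hne)
    have hrk : ¬ r ∣ k := fun hc =>
      Nat.Prime.one_lt hr |>.ne' (Nat.eq_one_of_dvd_one (hdk ▸ Nat.dvd_gcd hrd hc))
    rw [copart_factorization hN hk r hr, if_neg hrk]
    exact (Nat.factorization_le_iff_dvd hd0 hN).mpr hd r

lemma nat_coprime_of_no_common_prime {x y : ℕ}
    (h : ∀ r, r.Prime → r ∣ x → r ∣ y → False) : Nat.Coprime x y := by
  by_contra hc
  obtain ⟨r, hr, hrd⟩ := Nat.exists_prime_and_dvd hc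
  exact h r hr (hrd.trans (Nat.gcd_dvd_left _ _)) (hrd.trans (Nat.gcd_dvd_right _ _))

lemma jacobi_sq_one {s : ℤ} {b : ℕ} (h : Nat.Coprime s.natAbs b) (hb : b ≠ 0) :
    jacobiSym (s^2) b = 1 := by
  have h1 : jacobiSym s b ≠ 0 := by
    intro h0
    exact ((jacobiSym.eq_zero_iff.mp h0).2) h
  have h2 : jacobiSym (s^2) b = (jacobiSym s b)^2 := by
    rw [sq, sq, jacobiSym.mul_left]
  rcases jacobiSym.trichotomy s b with h3 | h3 | h3
  · exact absurd h3 h1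
  · rw [h2, h3]; norm_num
  · rw [h2, h3]; norm_num


lemma exists_jacobi_neg_one {t s : ℤ} (ht : Squarefree t) (hns : ¬IsSquare t) (hs : s ≠ 0) :
    ∃ b : ℕ, Odd b ∧ 0 < b ∧ jacobiSym (s^2 * t) b = -1 := by
  have ht0 : t ≠ 0 := ht.ne_zero
  set n := t.natAbs with hn
  have hn0 : n ≠ 0 := Int.natAbs_ne_zero.mpr ht0
  have hsqn : Squarefree n := Int.squarefree_natAbs.mpr ht
  set P := (s^2 * t).natAbs with hP
  have hP0 : P ≠ 0 := Int.natAbs_ne_zero.mpr (mul_ne_zero (pow_ne_zero _ hs) ht0)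
  have hnP : n ∣ P := Int.natAbs_dvd_natAbs.mpr (Dvd.intro_left _ rfl)
  have hsP : s.natAbs ∣ P := Int.natAbs_dvd_natAbs.mpr ⟨s * t, by ring⟩
  by_cases hop : ∃ p, p.Prime ∧ p ≠ 2 ∧ p ∣ n
  · obtain ⟨p, hp, hp2, hpn⟩ := hop
    haveI : Fact p.Prime := ⟨hp⟩
    obtain ⟨c, hc⟩ := FiniteField.exists_nonsquare (F := ZMod p)
      (by rw [ZMod.ringChar_zmod_n]; exact_mod_cast hp2)
    have hc0 : c ≠ 0 := fun h => hc (h ▸ (⟨0, by simp⟩ : IsSquare (0 : ZMod p)))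
    have h2p0 : 2 * p ≠ 0 := by have := hp.pos; omega
    set m := copart P (2 * p) with hm
    have hm0 : m ≠ 0 := copart_ne_zero hP0 _
    have hm2p : Nat.Coprime m (2 * p) := copart_coprime hP0 h2p0
    have hm2 : Nat.Coprime m 2 := Nat.Coprime.coprime_dvd_right ⟨p, rfl⟩ hm2p
    have hmp : Nat.Coprime m p := Nat.Coprime.coprime_dvd_right ⟨2, mul_comm 2 p⟩ hm2p
    have hcop2p : Nat.Coprime 2 p := (Nat.prime_two.coprime_iff_not_dvd).mpr
      (fun hd => hp2 ((Nat.prime_dvd_prime_iff_eq Nat.prime_two hp).mp hd).symm)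
    have h8p : Nat.Coprime 8 p := (show (8:ℕ) = 2^3 by norm_num) ▸ hcop2p.pow_left _
    have h8mp : Nat.Coprime (8 * m) p := Nat.Coprime.mul h8p hmp
    obtain ⟨b, hb1, hb2⟩ := (Nat.chineseRemainder h8mp 1 c.val : _)
    have hb8 : b % 8 = 1 := by
      have h8 : (8:ℕ) ∣ 8 * m := ⟨m, rfl⟩
      have : b % 8 = 1 % 8 := Nat.ModEq.of_dvd h8 hb1
      simpa using this
    have hb4 : b % 4 = 1 := by
      have h4 : (4:ℕ) ∣ 8 * m := ⟨2 * m, by ring⟩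
      have : b % 4 = 1 % 4 := Nat.ModEq.of_dvd h4 hb1
      simpa using this
    have hbodd : Odd b := by
      rw [Nat.odd_iff]; omega
    have hb0 : 0 < b := by
      rcases Nat.eq_zero_or_pos b with h | h
      · rw [h] at hb8; norm_num at hb8
      · exact h
    have hbm : b ≡ 1 [MOD m] := Nat.ModEq.of_dvd ⟨8, mul_comm 8 m⟩ hb1
    have hbzp : ((b : ℕ) : ZMod p) = c := by
      have h1 := (ZMod.natCast_eq_natCast_iff b c.val p).mpr hb2
      rw [h1]
      exact ZMod.natCast_rightInverse c
    have hpb : ¬ p ∣ b := fun hd => hc0 (by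
      rw [← hbzp]
      exact (ZMod.natCast_eq_zero_iff b p).mpr hd)
    have hcosb : Nat.Coprime s.natAbs b := by
      refine nat_coprime_of_no_common_prime fun q hq hq1 hq2 => ?_
      by_cases hq2' : q = 2
      · subst hq2'; rw [Nat.odd_iff] at hbodd; omega
      · by_cases hqp : q = p
        · exact hpb (hqp ▸ hq2)
        · have hqcop : Nat.Coprime q (2 * p) := Nat.Coprime.mul_right
            ((hq.coprime_iff_not_dvd).mpr
              (fun hd => hq2' ((Nat.prime_dvd_prime_iff_eq hq Nat.prime_two).mp hd)))
            ((hq.coprime_iff_not_dvd).mpr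
              (fun hd => hqp ((Nat.prime_dvd_prime_iff_eq hq hp).mp hd)))
          have hqm : q ∣ m := dvd_copart hP0 h2p0 (hq1.trans hsP) hqcop
          have hbq : b % q = 1 % q := Nat.ModEq.of_dvd hqm hbm
          have h1q : 1 % q = 1 := Nat.one_mod_eq_one.mpr hq.one_lt.ne'
          obtain ⟨w, hw⟩ := hq2
          have hbq0 : b % q = 0 := by rw [hw]; exact Nat.mul_mod_right q w
          omega
    -- decomposition n = q2 * n'
    set n' := copart n 2 with hn'def
    have hn'0 : n' ≠ 0 := copart_ne_zero hn0 2
    have hn'2 : Nat.Coprime n' 2 := copart_coprime hn0 two_ne_zero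
    have hn'odd : Odd n' := by
      refine Nat.not_even_iff_odd.mp fun he => ?_
      exact ((Nat.prime_two.coprime_iff_not_dvd).mp hn'2.symm) he.two_dvd
    obtain ⟨q2, hq2n', hq212⟩ : ∃ q2 : ℕ, q2 * n' = n ∧ (q2 = 1 ∨ q2 = 2) := by
      refine ⟨n.gcd (2 ^ n), ?_, ?_⟩
      · rw [hn'def]; exact copart_gcd_mul n 2
      · have hsf : Squarefree (n.gcd (2 ^ n)) := hsqn.squarefree_of_dvd (Nat.gcd_dvd_left _ _)
        obtain ⟨k, hk, hq2e⟩ := (Nat.dvd_prime_pow Nat.prime_two).mp (Nat.gcd_dvd_right n (2 ^ n))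
        match k, hq2e with
        | 0, hq2e => left; simpa using hq2e
        | 1, hq2e => right; simpa using hq2e
        | (k+2), hq2e =>
          exfalso
          have h4 : 2 * 2 ∣ n.gcd (2 ^ n) := by
            rw [hq2e]; exact ⟨2^k, by ring⟩
          exact absurd (Nat.isUnit_iff.mp (hsf 2 h4)) (by norm_num)
    have hpn' : p ∣ n' := dvd_copart hn0 two_ne_zero hpn hcop2p.symm
    set u' := n' / p with hu'def
    have hu' : p * u' = n' := Nat.mul_div_cancel' hpn'
    have hu'0 : u' ≠ 0 := fun h => hn'0 (by rw [← hu', h, mul_zero])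
    haveI : NeZero u' := ⟨hu'0⟩
    have hpu' : ¬ p ∣ u' := by
      intro hd
      have hppn : p * p ∣ n := ((mul_dvd_mul_left p hd).trans
        (hu' ▸ (copart_dvd n 2)))
      exact absurd (Nat.isUnit_iff.mp (hsqn p hppn)) hp.one_lt.ne'
    have hu'n' : u' ∣ n' := Dvd.intro_left p hu'
    have hu'2 : Nat.Coprime u' 2 := Nat.Coprime.coprime_dvd_left hu'n' hn'2
    have hu'm : u' ∣ m := dvd_copart hP0 h2p0 ((hu'n'.trans (copart_dvd n 2)).trans hnP)
      (Nat.Coprime.mul_right hu'2 ((hp.coprime_iff_not_dvd.mpr hpu').symm))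
    have hbu' : b ≡ 1 [MOD u'] := Nat.ModEq.of_dvd (hu'm.trans ⟨8, mul_comm 8 m⟩) hb1
    -- Jacobi computation
    refine ⟨b, hbodd, hb0, ?_⟩
    rw [jacobiSym.mul_left, jacobi_sq_one hcosb hb0.ne', one_mul]
    have hJn' : jacobiSym (n' : ℤ) b = -1 := by
      rw [← jacobiSym.quadratic_reciprocity_one_mod_four hb4 hn'odd]
      rw [← hu']
      have : ((p * u' : ℕ) : ℕ) = p * u' := rfl
      rw [jacobiSym.mul_right (b : ℤ) p u']
      have hJbp : jacobiSym (b : ℤ) p = -1 := by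
        rw [ZMod.nonsquare_iff_jacobiSym_eq_neg_one]
        rw [Int.cast_natCast, hbzp]
        exact hc
      have hJbu' : jacobiSym (b : ℤ) u' = 1 := by
        rw [jacobiSym.mod_left' (show (b : ℤ) % u' = (1:ℤ) % u' by exact_mod_cast hbu')]
        exact jacobiSym.one_left u'
      rw [hJbp, hJbu', mul_one]
    have hJn : jacobiSym (n : ℤ) b = -1 := by
      rw [show ((n : ℕ) : ℤ) = (q2 : ℤ) * (n' : ℤ) by exact_mod_cast hq2n'.symm,
        jacobiSym.mul_left]
      have hJq2 : jacobiSym (q2 : ℤ) b = 1 := by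
        rcases hq212 with h | h
        · rw [h]; exact_mod_cast jacobiSym.one_left b
        · rw [h, show ((2:ℕ):ℤ) = 2 from rfl, jacobiSym.at_two hbodd,
            ZMod.χ₈_nat_mod_eight, hb8]
          norm_num
      rw [hJq2, hJn', one_mul]
    have habs : t = (n:ℤ) ∨ t = -(n:ℤ) := by rw [hn]; exact Int.natAbs_eq t
    rcases habs with h | h
    · rw [h]; exact hJn
    · rw [h, show -(n:ℤ) = -1 * (n:ℤ) by ring, jacobiSym.mul_left,
        jacobiSym.at_neg_one hbodd, ZMod.χ₄_nat_mod_four, hb4, hJn]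
      norm_num
  · -- no odd prime: n = 1 or 2
    push_neg at hop
    have h2 : ∀ r, r.Prime → r ∣ n → r = 2 := fun r hr hd => by
      by_contra hne; exact (hop r hr hne) hd
    have hn12 : n = 1 ∨ n = 2 := by
      by_cases h1 : n = 1
      · left; exact h1
      · right
        obtain ⟨r, hr, hrd⟩ := Nat.exists_prime_and_dvd h1
        have hr2 : r = 2 := h2 r hr hrd
        subst hr2
        obtain ⟨n₂, hn₂⟩ := hrd
        by_cases h1' : n₂ = 1
        · omega
        · obtain ⟨r', hr', hrd'⟩ := Nat.exists_prime_and_dvd h1'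
          have hr'2 : r' = 2 := h2 r' hr' (hn₂ ▸ (hrd'.mul_left 2))
          subst hr'2
          exfalso
          refine absurd (hsqn 2 ?_) (by norm_num [Nat.isUnit_iff])
          obtain ⟨n₃, hn₃⟩ := hrd'
          exact ⟨n₃, by omega⟩
    have ht3 : t = -1 ∨ t = 2 ∨ t = -2 := by
      have habs : t = (n:ℤ) ∨ t = -(n:ℤ) := by rw [hn]; exact Int.natAbs_eq t
      rcases habs with h | h
      · rcases hn12 with h' | h'
        · exfalso; rw [h', Nat.cast_one] at h; exact hns (h ▸ IsSquare.one)
        · right; left; rw [h'] at h; exact_mod_cast h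
      · rcases hn12 with h' | h'
        · left; rw [h'] at h; exact_mod_cast h
        · right; right; rw [h'] at h; exact_mod_cast h
    -- construction
    set m := copart P 2 with hm
    have hm0 : m ≠ 0 := copart_ne_zero hP0 2
    have hm2 : Nat.Coprime m 2 := copart_coprime hP0 (by norm_num)
    have h8m : Nat.Coprime 8 m := by
      have : Nat.Coprime 2 m := hm2.symm
      exact (by norm_num : (8:ℕ) = 2^3) ▸ this.pow_left _
    set r : ℕ := if t = -1 then 3 else 5 with hr
    obtain ⟨b, hb1, hb2⟩ := (Nat.chineseRemainder h8m r 1 : _)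
    have hrlt : r % 8 = r := by rcases ht3 with h|h|h <;> norm_num [hr, h]
    have hb8 : b % 8 = r := by rw [← hrlt]; exact hb1
    have hbodd : Odd b := by
      have h28 : (2:ℕ) ∣ 8 := by norm_num
      have hb2' : b % 2 = r % 2 := Nat.ModEq.of_dvd h28 hb1
      rw [Nat.odd_iff]
      rcases ht3 with h|h|h <;> norm_num [hr, h] at hb2' <;> omega
    have hb0 : 0 < b := by
      rcases Nat.eq_zero_or_pos b with h | h
      · rw [h] at hb8; rcases ht3 with h'|h'|h' <;> norm_num [hr, h'] at hb8
      · exact h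
    have hbm : b % m = 1 % m := hb2
    have hcosb : Nat.Coprime s.natAbs b := by
      refine nat_coprime_of_no_common_prime fun q hq hq1 hq2 => ?_
      by_cases hq2' : q = 2
      · subst hq2'
        rw [Nat.odd_iff] at hbodd; omega
      · have hqm : q ∣ m := dvd_copart hP0 (by norm_num) (hq1.trans hsP)
          ((hq.coprime_iff_not_dvd).mpr
            (fun hd => hq2' ((Nat.prime_dvd_prime_iff_eq hq Nat.prime_two).mp hd)))
        have hbq : b % q = 1 % q := Nat.ModEq.of_dvd hqm hb2
        have h1q : 1 % q = 1 := Nat.one_mod_eq_one.mpr hq.one_lt.ne'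
        obtain ⟨c, hc⟩ := hq2
        have hbq0 : b % q = 0 := by rw [hc]; exact Nat.mul_mod_right q c
        omega
    have hb4 : b % 4 = r % 4 := by
      have h48 : (4:ℕ) ∣ 8 := by norm_num
      exact Nat.ModEq.of_dvd h48 hb1
    refine ⟨b, hbodd, hb0, ?_⟩
    rw [jacobiSym.mul_left, jacobi_sq_one hcosb hb0.ne', one_mul]
    rcases ht3 with h|h|h <;> rw [h]
    · rw [jacobiSym.at_neg_one hbodd, ZMod.χ₄_nat_mod_four, hb4]
      norm_num [hr, h]
    · rw [jacobiSym.at_two hbodd, ZMod.χ₈_nat_mod_eight, hb8]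
      norm_num [hr, h]
    · rw [show ((-2:ℤ)) = -1 * 2 by norm_num, jacobiSym.mul_left,
        jacobiSym.at_neg_one hbodd, jacobiSym.at_two hbodd,
        ZMod.χ₄_nat_mod_four, ZMod.χ₈_nat_mod_eight, hb4, hb8]
      norm_num [hr, h]


lemma int_isSquare_of_forall_mod (D : ℤ)
    (h : ∀ q : ℕ, 0 < q → ∃ x : ℤ, (q : ℤ) ∣ x ^ 2 - D) : IsSquare D := by
  by_contra hns
  have hD0 : D ≠ 0 := fun h0 => hns (h0 ▸ ⟨0, by simp⟩)
  obtain ⟨a, s, hab, hsf⟩ := Nat.sq_mul_squarefree D.natAbs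
  have ha0 : a ≠ 0 := hsf.ne_zero
  have hs0 : s ≠ 0 := by
    intro h0
    rw [h0] at hab
    simp at hab
    exact hD0 (Int.natAbs_eq_zero.mp hab.symm)
  set t : ℤ := Int.sign D * a with htdef
  have htabs : t.natAbs = a := by
    rw [htdef, Int.natAbs_mul, Int.natAbs_sign_of_ne_zero hD0, one_mul, Int.natAbs_natCast]
  have hD : ((s : ℤ)) ^ 2 * t = D := by
    have h1 : ((D.natAbs : ℤ)) = (s : ℤ) ^ 2 * a := by exact_mod_cast hab.symm
    calc (s:ℤ)^2 * t = D.sign * ((s:ℤ)^2 * a) := by rw [htdef]; ring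
      _ = D.sign * D.natAbs := by rw [← h1]
      _ = D := Int.sign_mul_natAbs D
  have ht : Squarefree t := Int.squarefree_natAbs.mp (htabs ▸ hsf)
  have htns : ¬IsSquare t := by
    rintro ⟨r, hr⟩
    exact hns ⟨(s : ℤ) * r, by rw [← hD, hr]; ring⟩
  obtain ⟨b, hbodd, hb0, hJ⟩ := exists_jacobi_neg_one ht htns (Nat.cast_ne_zero.mpr hs0)
  obtain ⟨x, hx⟩ := h b hb0
  apply ZMod.nonsquare_of_jacobiSym_eq_neg_one hJ
  refine ⟨(x : ZMod b), ?_⟩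
  have h0 : ((x ^ 2 - D : ℤ) : ZMod b) = 0 := (ZMod.intCast_zmod_eq_zero_iff_dvd _ b).mpr hx
  push_cast at h0
  rw [hD]
  linear_combination -h0


lemma natCast_prime_not_unit {r : ℕ} (hr : r.Prime) : ¬ IsUnit (r : ℤ) := by
  intro h
  rcases Int.isUnit_iff.mp h with h' | h'
  · exact hr.one_lt.ne' (by exact_mod_cast h')
  · have : (0:ℤ) ≤ r := Int.natCast_nonneg r
    omega

/-- A quadratic polynomial `f ∈ ℤ[x]` is intersective (has a root modulo `q` for every
positive integer `q`) if and only if it factors as `a(αx+β)(γx+λ)` with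
`gcd(α,β) = gcd(γ,λ) = gcd(α,γ) = 1`. -/
theorem intersective_quadratic_iff (f : Polynomial ℤ) (hf : f.natDegree = 2) :
    (∀ q : ℕ, 0 < q → ∃ n : ℤ, (q : ℤ) ∣ f.eval n) ↔
      ∃ a α β γ lam : ℤ, IsCoprime α β ∧ IsCoprime γ lam ∧ IsCoprime α γ ∧
        ∀ x : ℤ, f.eval x = a * (α * x + β) * (γ * x + lam) := by
  have hfne : f ≠ 0 := fun h => by simp [h] at hf
  set A := f.coeff 2 with hA
  set B := f.coeff 1 with hB
  set C := f.coeff 0 with hC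
  have hA0 : A ≠ 0 := by
    have h := Polynomial.leadingCoeff_ne_zero.mpr hfne
    rwa [Polynomial.leadingCoeff, hf] at h
  have heval : ∀ x : ℤ, f.eval x = A * x ^ 2 + B * x + C := by
    intro x
    rw [Polynomial.eval_eq_sum_range, hf]
    rw [Finset.sum_range_succ, Finset.sum_range_succ, Finset.sum_range_succ,
      Finset.sum_range_zero]
    ring
  constructor
  · intro H
    have h4A : (4:ℤ) * A ≠ 0 := mul_ne_zero (by norm_num) hA0
    have h2A : (2:ℤ) * A ≠ 0 := mul_ne_zero (by norm_num) hA0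
    have hsq : IsSquare (B ^ 2 - 4 * A * C) := by
      apply int_isSquare_of_forall_mod
      intro q hq
      obtain ⟨n, hn⟩ := H q hq
      refine ⟨2 * A * n + B, ?_⟩
      have hkey : (2*A*n+B)^2 - (B^2 - 4*A*C) = 4*A * f.eval n := by
        rw [heval n]; ring
      rw [hkey]
      exact Dvd.dvd.mul_left hn (4*A)
    obtain ⟨d, hd⟩ := hsq
    have hG1pos : 0 < Int.gcd (2*A) (B - d) := by
      rcases Nat.eq_zero_or_pos (Int.gcd (2*A) (B - d)) with h | h
      · exact absurd (Int.gcd_eq_zero_iff.mp h).1 h2A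
      · exact h
    have hG2pos : 0 < Int.gcd (2*A) (B + d) := by
      rcases Nat.eq_zero_or_pos (Int.gcd (2*A) (B + d)) with h | h
      · exact absurd (Int.gcd_eq_zero_iff.mp h).1 h2A
      · exact h
    set G1 : ℤ := ((Int.gcd (2*A) (B - d) : ℕ) : ℤ) with hG1def
    set G2 : ℤ := ((Int.gcd (2*A) (B + d) : ℕ) : ℤ) with hG2def
    have hG10 : G1 ≠ 0 := by
      rw [hG1def]; exact_mod_cast hG1pos.ne'
    have hG20 : G2 ≠ 0 := by
      rw [hG2def]; exact_mod_cast hG2pos.ne'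
    set α := (2*A) / G1 with hαdef
    set β := (B - d) / G1 with hβdef
    set γ := (2*A) / G2 with hγdef
    set lam := (B + d) / G2 with hlamdef
    have hα : G1 * α = 2*A := Int.mul_ediv_cancel' (Int.gcd_dvd_left _ _)
    have hβ : G1 * β = B - d := Int.mul_ediv_cancel' (Int.gcd_dvd_right _ _)
    have hγ : G2 * γ = 2*A := Int.mul_ediv_cancel' (Int.gcd_dvd_left _ _)
    have hlam : G2 * lam = B + d := Int.mul_ediv_cancel' (Int.gcd_dvd_right _ _)
    have hcab : IsCoprime α β :=
      Int.isCoprime_iff_gcd_eq_one.mpr (Int.gcd_div_gcd_div_gcd hG1pos)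
    have hcgl : IsCoprime γ lam :=
      Int.isCoprime_iff_gcd_eq_one.mpr (Int.gcd_div_gcd_div_gcd hG2pos)
    have key : ∀ x : ℤ, 4*A*(f.eval x) = (G1*G2) * ((α*x+β)*(γ*x+lam)) := by
      intro x
      have e1 : G1*(α*x+β) = 2*A*x + (B - d) := by
        rw [mul_add, ← mul_assoc, hα, hβ]
      have e2 : G2*(γ*x+lam) = 2*A*x + (B + d) := by
        rw [mul_add, ← mul_assoc, hγ, hlam]
      calc 4*A*(f.eval x) = (2*A*x + (B-d)) * (2*A*x + (B+d)) := by
            rw [heval x]; linear_combination -hd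
        _ = (G1*(α*x+β)) * (G2*(γ*x+lam)) := by rw [e1, e2]
        _ = (G1*G2) * ((α*x+β)*(γ*x+lam)) := by ring
    have k0 := key 0
    have k1 := key 1
    have km := key (-1)
    rw [heval] at k0 k1 km
    have hc2 : 4*A*A = (G1*G2)*(α*γ) := by
      have h2 : (2:ℤ) * (4*A*A) = 2 * ((G1*G2)*(α*γ)) := by
        linear_combination k1 + km - 2*k0
      exact mul_left_cancel₀ two_ne_zero h2
    have hc1 : 4*A*B = (G1*G2)*(α*lam+β*γ) := by
      have h2 : (2:ℤ) * (4*A*B) = 2 * ((G1*G2)*(α*lam+β*γ)) := by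
        linear_combination k1 - km
      exact mul_left_cancel₀ two_ne_zero h2
    have hc0 : 4*A*C = (G1*G2)*(β*lam) := by linear_combination k0
    -- Gauss's lemma argument
    have hEpos : 0 < Int.gcd (4*A) (G1*G2) := by
      rcases Nat.eq_zero_or_pos (Int.gcd (4*A) (G1*G2)) with h | h
      · exact absurd (Int.gcd_eq_zero_iff.mp h).1 h4A
      · exact h
    set E : ℤ := ((Int.gcd (4*A) (G1*G2) : ℕ) : ℤ) with hEdef
    have hE0 : E ≠ 0 := by rw [hEdef]; exact_mod_cast hEpos.ne'
    set v := (4*A) / E with hvdef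
    set u := (G1*G2) / E with hudef
    have hv : E * v = 4*A := Int.mul_ediv_cancel' (Int.gcd_dvd_left _ _)
    have hu : E * u = G1*G2 := Int.mul_ediv_cancel' (Int.gcd_dvd_right _ _)
    have hvu : IsCoprime v u :=
      Int.isCoprime_iff_gcd_eq_one.mpr (Int.gcd_div_gcd_div_gcd hEpos)
    have hvA : v*A = u*(α*γ) :=
      mul_left_cancel₀ hE0 (by linear_combination A*hv - (α*γ)*hu + hc2)
    have hvB : v*B = u*(α*lam+β*γ) :=
      mul_left_cancel₀ hE0 (by linear_combination B*hv - (α*lam+β*γ)*hu + hc1)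
    have hvC : v*C = u*(β*lam) :=
      mul_left_cancel₀ hE0 (by linear_combination C*hv - (β*lam)*hu + hc0)
    have hvunit : IsUnit v := by
      rw [Int.isUnit_iff_natAbs_eq]
      by_contra hne
      obtain ⟨r, hr, hrd⟩ := Nat.exists_prime_and_dvd hne
      have hrZ : Prime (r:ℤ) := Int.prime_iff_natAbs_prime.mpr (by simpa using hr)
      have hrv : (r:ℤ) ∣ v := Int.dvd_natAbs.mp (Int.natCast_dvd_natCast.mpr hrd)
      have hrnu : ¬ (r:ℤ) ∣ u := fun hdu =>
        natCast_prime_not_unit hr (hvu.isUnit_of_dvd' hrv hdu)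
      have h1 : (r:ℤ) ∣ α*γ := by
        have h' : (r:ℤ) ∣ u*(α*γ) := hvA ▸ (hrv.mul_right A)
        exact (hrZ.dvd_mul.mp h').resolve_left hrnu
      have h2 : (r:ℤ) ∣ α*lam+β*γ := by
        have h' : (r:ℤ) ∣ u*(α*lam+β*γ) := hvB ▸ (hrv.mul_right B)
        exact (hrZ.dvd_mul.mp h').resolve_left hrnu
      have h3 : (r:ℤ) ∣ β*lam := by
        have h' : (r:ℤ) ∣ u*(β*lam) := hvC ▸ (hrv.mul_right C)
        exact (hrZ.dvd_mul.mp h').resolve_left hrnu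
      rcases hrZ.dvd_mul.mp h1 with hα' | hγ'
      · have hnβ : ¬ (r:ℤ) ∣ β := fun hdd =>
          natCast_prime_not_unit hr (hcab.isUnit_of_dvd' hα' hdd)
        have hlam' : (r:ℤ) ∣ lam := (hrZ.dvd_mul.mp h3).resolve_left hnβ
        have hnγ : ¬ (r:ℤ) ∣ γ := fun hdd =>
          natCast_prime_not_unit hr (hcgl.isUnit_of_dvd' hdd hlam')
        have hbg : (r:ℤ) ∣ β*γ := by
          have h' := dvd_sub h2 (hα'.mul_right lam)
          have he : α*lam+β*γ - α*lam = β*γ := by ring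
          rwa [he] at h'
        rcases hrZ.dvd_mul.mp hbg with h' | h'
        · exact hnβ h'
        · exact hnγ h'
      · have hnlam : ¬ (r:ℤ) ∣ lam := fun hdd =>
          natCast_prime_not_unit hr (hcgl.isUnit_of_dvd' hγ' hdd)
        have hβ' : (r:ℤ) ∣ β := (hrZ.dvd_mul.mp h3).resolve_right hnlam
        have hnα : ¬ (r:ℤ) ∣ α := fun hdd =>
          natCast_prime_not_unit hr (hcab.isUnit_of_dvd' hdd hβ')
        have hal : (r:ℤ) ∣ α*lam := by
          have h' := dvd_sub h2 (hγ'.mul_left β)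
          have he : α*lam+β*γ - β*γ = α*lam := by ring
          rwa [he] at h'
        rcases hrZ.dvd_mul.mp hal with h' | h'
        · exact hnα h'
        · exact hnlam h'
    have hvv : v*v = 1 := by
      rcases Int.isUnit_iff.mp hvunit with h | h <;> rw [h] <;> norm_num
    set a := v * u with hadef
    have ha4 : 4*A*a = G1*G2 := by
      rw [hadef]
      linear_combination (-(v*u))*hv + hu + (E*u)*hvv
    have hfeq : ∀ x : ℤ, f.eval x = a*((α*x+β)*(γ*x+lam)) := by
      intro x
      have h' : (4*A) * (f.eval x) = (4*A) * (a * ((α*x+β)*(γ*x+lam))) := by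
        rw [key x, ← ha4]; ring
      exact mul_left_cancel₀ h4A h'
    have ha0 : a ≠ 0 := by
      intro h
      rw [h, mul_zero] at ha4
      exact mul_ne_zero hG10 hG20 ha4.symm
    have hca : IsCoprime α γ := by
      rw [Int.isCoprime_iff_gcd_eq_one]
      by_contra hne
      obtain ⟨r, hr, hrd⟩ := Nat.exists_prime_and_dvd hne
      have hrZ : Prime (r:ℤ) := Int.prime_iff_natAbs_prime.mpr (by simpa using hr)
      have hrα : (r:ℤ) ∣ α :=
        Int.dvd_natAbs.mp (Int.natCast_dvd_natCast.mpr (hrd.trans (Nat.gcd_dvd_left _ _)))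
      have hrγ : (r:ℤ) ∣ γ :=
        Int.dvd_natAbs.mp (Int.natCast_dvd_natCast.mpr (hrd.trans (Nat.gcd_dvd_right _ _)))
      have hnβ : ¬ (r:ℤ) ∣ β := fun hdd =>
        natCast_prime_not_unit hr (hcab.isUnit_of_dvd' hrα hdd)
      have hnlam : ¬ (r:ℤ) ∣ lam := fun hdd =>
        natCast_prime_not_unit hr (hcgl.isUnit_of_dvd' hrγ hdd)
      obtain ⟨n, hn⟩ := H (r ^ a.natAbs) (pow_pos hr.pos _)
      rw [hfeq n] at hn
      have hcast : ((r ^ a.natAbs : ℕ) : ℤ) = (r:ℤ) ^ a.natAbs := by push_cast; ring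
      rw [hcast] at hn
      have hnd1 : ¬ (r:ℤ) ∣ (α*n+β) := by
        intro h'
        have h'' := dvd_sub h' (hrα.mul_right n)
        have he : α*n+β - α*n = β := by ring
        rw [he] at h''
        exact hnβ h''
      have hnd2 : ¬ (r:ℤ) ∣ (γ*n+lam) := by
        intro h'
        have h'' := dvd_sub h' (hrγ.mul_right n)
        have he : γ*n+lam - γ*n = lam := by ring
        rw [he] at h''
        exact hnlam h''
      have hn' : (r:ℤ) ^ a.natAbs ∣ (a * (α*n+β)) * (γ*n+lam) := by
        rwa [mul_assoc]
      have hstep1 := hrZ.pow_dvd_of_dvd_mul_right _ hnd2 hn'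
      have hstep2 := hrZ.pow_dvd_of_dvd_mul_right _ hnd1 hstep1
      have hnatdvd : r ^ a.natAbs ∣ a.natAbs := by
        have h' := Int.natAbs_dvd_natAbs.mpr hstep2
        simpa [Int.natAbs_pow] using h'
      have hle : r ^ a.natAbs ≤ a.natAbs :=
        Nat.le_of_dvd (Int.natAbs_pos.mpr ha0) hnatdvd
      have hlt : a.natAbs < 2 ^ a.natAbs := Nat.lt_two_pow_self
      have hpow : 2 ^ a.natAbs ≤ r ^ a.natAbs :=
        Nat.pow_le_pow_left hr.two_le _
      omega
    exact ⟨a, α, β, γ, lam, hcab, hcgl, hca, fun x => by rw [hfeq x]; ring⟩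
  · rintro ⟨a, α, β, γ, lam, hab, hgl, hag, hfac⟩ q hq
    have hq0 : q ≠ 0 := hq.ne'
    set m2 := q.gcd (α.natAbs ^ q) with hm2def
    set m1 := copart q α.natAbs with hm1def
    have hmul : m2 * m1 = q := copart_gcd_mul q α.natAbs
    have hm10 : m1 ≠ 0 := copart_ne_zero hq0 _
    have hm20 : m2 ≠ 0 := by
      intro h; rw [h, zero_mul] at hmul; exact hq0 hmul.symm
    have hm2α : ∀ r : ℕ, r.Prime → r ∣ m2 → r ∣ α.natAbs := fun r hr hd =>
      hr.dvd_of_dvd_pow (hd.trans (Nat.gcd_dvd_right _ _))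
    have hm1α : Nat.Coprime m1 α.natAbs := by
      by_cases hα0 : α.natAbs = 0
      · have h1 : m1 = 1 := by
          rw [hm1def, copart, hα0, zero_pow hq0, Nat.gcd_zero_right, Nat.div_self hq]
        rw [h1]
        exact Nat.coprime_one_left _
      · exact copart_coprime hq0 hα0
    have hm1m2 : Nat.Coprime m1 m2 := by
      refine nat_coprime_of_no_common_prime fun r hr h1 h2 => ?_
      have := hm2α r hr h2
      have hg : r ∣ Nat.gcd m1 α.natAbs := Nat.dvd_gcd h1 this
      rw [hm1α] at hg
      exact hr.one_lt.ne' (Nat.eq_one_of_dvd_one hg)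
    have hm2γ : Nat.Coprime γ.natAbs m2 := by
      refine nat_coprime_of_no_common_prime fun r hr h1 h2 => ?_
      have hrα : (r : ℤ) ∣ α := Int.dvd_natAbs.mp (Int.natCast_dvd_natCast.mpr (hm2α r hr h2))
      have hrγ : (r : ℤ) ∣ γ := Int.dvd_natAbs.mp (Int.natCast_dvd_natCast.mpr h1)
      have := hag.isUnit_of_dvd' hrα hrγ
      rcases Int.isUnit_iff.mp this with h | h <;> [skip; skip] <;>
        · have : (r : ℤ) = 1 ∨ (r:ℤ) = -1 := Int.isUnit_iff.mp this
          rcases this with h' | h'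
          · exact hr.one_lt.ne' (by exact_mod_cast h')
          · have : (0:ℤ) ≤ r := Int.natCast_nonneg r
            omega
    have hαm1 : IsCoprime α ((m1 : ℕ) : ℤ) := by
      rw [Int.isCoprime_iff_gcd_eq_one]
      have : Int.gcd α ((m1:ℕ):ℤ) = Nat.gcd α.natAbs m1 := by
        simp [Int.gcd]
      rw [this]
      exact hm1α.symm
    have hγm2 : IsCoprime γ ((m2 : ℕ) : ℤ) := by
      rw [Int.isCoprime_iff_gcd_eq_one]
      have : Int.gcd γ ((m2:ℕ):ℤ) = Nat.gcd γ.natAbs m2 := by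
        simp [Int.gcd]
      rw [this]
      exact hm2γ
    have h12 : IsCoprime ((m1 : ℕ) : ℤ) ((m2 : ℕ) : ℤ) := by
      rw [Int.isCoprime_iff_gcd_eq_one]
      have : Int.gcd ((m1:ℕ):ℤ) ((m2:ℕ):ℤ) = Nat.gcd m1 m2 := by
        simp [Int.gcd]
      rw [this]
      exact hm1m2
    obtain ⟨u1, w1, h1⟩ := hαm1
    obtain ⟨u2, w2, h2⟩ := hγm2
    obtain ⟨u3, w3, h3⟩ := h12
    set n1 : ℤ := -(β * u1) with hn1def
    set n2 : ℤ := -(lam * u2) with hn2def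
    have hn1 : ((m1:ℕ):ℤ) ∣ α * n1 + β :=
      ⟨β * w1, by rw [hn1def]; linear_combination (-β) * h1⟩
    have hn2 : ((m2:ℕ):ℤ) ∣ γ * n2 + lam :=
      ⟨lam * w2, by rw [hn2def]; linear_combination (-lam) * h2⟩
    set n : ℤ := n1 * (w3 * ((m2:ℕ):ℤ)) + n2 * (u3 * ((m1:ℕ):ℤ)) with hndef
    obtain ⟨c1, hc1⟩ := hn1
    obtain ⟨c2, hc2⟩ := hn2
    have hd1 : ((m1:ℕ):ℤ) ∣ α * n + β :=
      ⟨w3 * ((m2:ℕ):ℤ) * c1 + u3 * (α * n2 + β), by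
        rw [hndef]; linear_combination (w3 * ((m2:ℕ):ℤ)) * hc1 + (-β) * h3⟩
    have hd2 : ((m2:ℕ):ℤ) ∣ γ * n + lam :=
      ⟨u3 * ((m1:ℕ):ℤ) * c2 + w3 * (γ * n1 + lam), by
        rw [hndef]; linear_combination (u3 * ((m1:ℕ):ℤ)) * hc2 + (-lam) * h3⟩
    refine ⟨n, ?_⟩
    rw [hfac n]
    have hqm : ((q:ℕ):ℤ) = ((m1:ℕ):ℤ) * ((m2:ℕ):ℤ) := by
      rw [← hmul]; push_cast; ring
    rw [hqm]
    have := Dvd.dvd.mul_left (mul_dvd_mul hd1 hd2) a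
    rwa [← mul_assoc] at this
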